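/- arXiv:2212.02372 — 2 statements merged into one kernel-verified Lean document; each statement's English description precedes it below -/
import Mathlib

section
/- If S₁,…,S_k : ℝ³ → ℝ³ are similarity transformations with ratios s₁,…,s_k satisfying s₁² + ⋯ + s_k² < 1, and A ⊆ ℝ³ is a nonempty compact set with A = S₁(A) ∪ ⋯ ∪ S_k(A), then the 2-dimensional Hausdorff measure of A is zero. -/
open MeasureTheory

section aux

variable {X : Type*} [MetricSpace X] {k : ℕ}

/-- Iterated composition of maps along a word. -/
def iterWord (S : Fin k → X → X) : (n : ℕ) → (Fin n → Fin k) → X → X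
  | 0, _ => id
  | n + 1, w => S (w 0) ∘ iterWord S n (w ∘ Fin.succ)

lemma iterWord_cover (S : Fin k → X → X) (A : Set X)
    (hself : A = ⋃ i, S i '' A) (n : ℕ) :
    A ⊆ ⋃ w : Fin n → Fin k, iterWord S n w '' A := by
  induction n with
  | zero =>
    intro x hx
    exact Set.mem_iUnion.2 ⟨fun j => j.elim0, ⟨x, hx, rfl⟩⟩
  | succ n ih =>
    intro x hx
    rw [hself] at hx
    obtain ⟨i, y, hy, rfl⟩ := Set.mem_iUnion.1 hx
    obtain ⟨w, z, hz, rfl⟩ := Set.mem_iUnion.1 (ih hy)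
    refine Set.mem_iUnion.2 ⟨Fin.cons i w, ⟨z, hz, ?_⟩⟩
    have h1 : (Fin.cons i w : Fin (n+1) → Fin k) ∘ Fin.succ = w := by
      funext j; simp [Fin.cons_succ]
    simp [iterWord, h1, Fin.cons_zero]

lemma iterWord_lipschitz (S : Fin k → X → X) (σ : Fin k → NNReal)
    (hlip : ∀ i, LipschitzWith (σ i) (S i)) (n : ℕ) (w : Fin n → Fin k) :
    LipschitzWith (∏ j, σ (w j)) (iterWord S n w) := by
  induction n with
  | zero => simpa [iterWord] using LipschitzWith.id
  | succ n ih =>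
    have := (hlip (w 0)).comp (ih (w ∘ Fin.succ))
    rw [Fin.prod_univ_succ]
    exact this

end aux

/-- If `S₁,…,S_k` are similarity transformations of `ℝ³` with ratios `s₁,…,s_k`
satisfying `s₁² + ⋯ + s_k² < 1`, and `A` is a nonempty compact set with
`A = S₁(A) ∪ ⋯ ∪ S_k(A)`, then the 2-dimensional Hausdorff measure of `A` is zero. -/
theorem stmt0 (k : ℕ)
    (S : Fin k → EuclideanSpace ℝ (Fin 3) → EuclideanSpace ℝ (Fin 3))
    (s : Fin k → ℝ) (hs : ∀ i, 0 < s i)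
    (hsim : ∀ i x y, dist (S i x) (S i y) = s i * dist x y)
    (hsum : ∑ i, (s i) ^ 2 < 1)
    (A : Set (EuclideanSpace ℝ (Fin 3))) (hne : A.Nonempty) (hcomp : IsCompact A)
    (hself : A = ⋃ i, S i '' A) :
    μH[2] A = 0 := by
  -- nonnegative version of the ratios
  set σ : Fin k → NNReal := fun i => ⟨s i, (hs i).le⟩ with hσ
  have hσs : ∀ i, (σ i : ℝ) = s i := fun i => rfl
  have hlip : ∀ i, LipschitzWith (σ i) (S i) := by
    intro i
    refine LipschitzWith.of_dist_le_mul fun x y => ?_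
    rw [hsim i x y, hσs]
  -- each ratio is < 1
  have hσlt : ∀ i, σ i < 1 := by
    intro i
    have h1 : s i ^ 2 ≤ ∑ j, s j ^ 2 :=
      Finset.single_le_sum (fun j _ => sq_nonneg (s j)) (Finset.mem_univ i)
    have h2 : s i ^ 2 < 1 := lt_of_le_of_lt h1 hsum
    have h3 : s i < 1 := by nlinarith [hs i]
    exact show (σ i : ℝ) < 1 from h3
  set c : NNReal := Finset.univ.sup σ with hc
  have hclt : c < 1 := by
    rw [hc, Finset.sup_lt_iff (by norm_num : (0 : NNReal) < 1)]
    exact fun i _ => hσlt i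
  have hDne : EMetric.diam A ≠ ⊤ := hcomp.isBounded.ediam_ne_top
  set q : ENNReal := ∑ i, (σ i : ENNReal) ^ 2 with hq
  have hqlt : q < 1 := by
    have h1 : (∑ i, σ i ^ 2 : NNReal) < 1 := by
      rw [← NNReal.coe_lt_coe]
      push_cast
      simpa [hσs] using hsum
    have h2 : q = ((∑ i, σ i ^ 2 : NNReal) : ENNReal) := by
      rw [hq]; push_cast; rfl
    rw [h2]
    exact_mod_cast h1
  -- the covering families
  set t : ∀ n : ℕ, (Fin n → Fin k) → Set (EuclideanSpace ℝ (Fin 3)) :=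
    fun n w => iterWord S n w '' A with ht
  have hdiam : ∀ n (w : Fin n → Fin k),
      EMetric.diam (t n w) ≤ ((∏ j, σ (w j) : NNReal) : ENNReal) * EMetric.diam A :=
    fun n w => (iterWord_lipschitz S σ hlip n w).ediam_image_le A
  have hdiam' : ∀ n (w : Fin n → Fin k),
      EMetric.diam (t n w) ≤ (c : ENNReal) ^ n * EMetric.diam A := by
    intro n w
    refine (hdiam n w).trans (mul_le_mul_left ?_ _)
    have h1 : (∏ j, σ (w j) : NNReal) ≤ c ^ n := by
      calc (∏ j, σ (w j)) ≤ ∏ _j : Fin n, c :=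
            Finset.prod_le_prod' fun j _ => Finset.le_sup (Finset.mem_univ (w j))
        _ = c ^ n := by simp
    exact_mod_cast h1
  have hr0 : Filter.Tendsto (fun n : ℕ => (c : ENNReal) ^ n * EMetric.diam A)
      Filter.atTop (nhds 0) := by
    have h1 : Filter.Tendsto (fun n : ℕ => (c : ENNReal) ^ n) Filter.atTop (nhds 0) :=
      ENNReal.tendsto_pow_atTop_nhds_zero_of_lt_one (by exact_mod_cast hclt)
    simpa using ENNReal.Tendsto.mul_const h1 (Or.inr hDne)
  have key : μH[2] A ≤ Filter.liminf
      (fun n : ℕ => ∑ w : Fin n → Fin k, EMetric.diam (t n w) ^ (2 : ℝ)) Filter.atTop :=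
    Measure.hausdorffMeasure_le_liminf_sum 2 A
      (fun n => (c : ENNReal) ^ n * EMetric.diam A) hr0 t
      (Filter.Eventually.of_forall fun n w => hdiam' n w)
      (Filter.Eventually.of_forall fun n => iterWord_cover S A hself n)
  -- bound the sums
  have hsumbound : ∀ n : ℕ,
      (∑ w : Fin n → Fin k, EMetric.diam (t n w) ^ (2 : ℝ)) ≤ q ^ n * EMetric.diam A ^ 2 := by
    intro n
    calc ∑ w : Fin n → Fin k, EMetric.diam (t n w) ^ (2 : ℝ)
        ≤ ∑ w : Fin n → Fin k,
            (((∏ j, σ (w j) : NNReal) : ENNReal) * EMetric.diam A) ^ (2 : ℝ) := by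
          refine Finset.sum_le_sum fun w _ => ?_
          exact ENNReal.rpow_le_rpow (hdiam n w) (by norm_num)
      _ = ∑ w : Fin n → Fin k, (∏ j, (σ (w j) : ENNReal) ^ 2) * EMetric.diam A ^ 2 := by
          refine Finset.sum_congr rfl fun w _ => ?_
          rw [ENNReal.mul_rpow_of_nonneg _ _ (by norm_num : (0:ℝ) ≤ 2)]
          congr 1
          · rw [show ((2:ℝ) = ((2:ℕ):ℝ)) by norm_num, ENNReal.rpow_natCast]
            push_cast
            rw [← Finset.prod_pow]
          · rw [show ((2:ℝ) = ((2:ℕ):ℝ)) by norm_num, ENNReal.rpow_natCast]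
      _ = (∑ w : Fin n → Fin k, ∏ j, (σ (w j) : ENNReal) ^ 2) * EMetric.diam A ^ 2 := by
          rw [Finset.sum_mul]
      _ = q ^ n * EMetric.diam A ^ 2 := by
          rw [hq, Fintype.sum_pow (fun i => (σ i : ENNReal) ^ 2) n]
  have hlim0 : Filter.Tendsto (fun n : ℕ => q ^ n * EMetric.diam A ^ 2)
      Filter.atTop (nhds 0) := by
    have h1 : Filter.Tendsto (fun n : ℕ => q ^ n) Filter.atTop (nhds 0) :=
      ENNReal.tendsto_pow_atTop_nhds_zero_of_lt_one hqlt
    have hD2 : EMetric.diam A ^ 2 ≠ ⊤ := by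
      simp [ENNReal.pow_eq_top_iff, hDne]
    simpa using ENNReal.Tendsto.mul_const h1 (Or.inr hD2)
  have hfinal : Filter.liminf
      (fun n : ℕ => ∑ w : Fin n → Fin k, EMetric.diam (t n w) ^ (2 : ℝ)) Filter.atTop ≤ 0 := by
    have h1 := Filter.liminf_le_liminf (Filter.Eventually.of_forall hsumbound)
      (f := Filter.atTop)
    rw [hlim0.liminf_eq] at h1
    exact h1
  exact le_antisymm (key.trans hfinal) zero_le
end

section
/- Let A ⊆ ℝ³ be a nonempty compact set and S₁,…,S_k similarity transformations of ℝ³ with ratios s₁,…,s_k such that A = S₁(A) ∪ ⋯ ∪ S_k(A) and s₁² + ⋯ + s_k² < 1. Then for every 2-dimensional affine subspace Π ⊆ ℝ³, the orthogonal projection of A onto Π has 2-dimensional Lebesgue (Hausdorff) measure zero. -/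
open MeasureTheory
open scoped RealInnerProductSpace NNReal ENNReal

private def compMaps {k : ℕ} {X : Type*} (S : Fin k → X → X) :
    (n : ℕ) → (Fin n → Fin k) → X → X
  | 0, _ => id
  | (n+1), w => S (w 0) ∘ compMaps S n (Fin.tail w)

private lemma compMaps_dist {k : ℕ} {X : Type*} [MetricSpace X]
    (S : Fin k → X → X) (s : Fin k → ℝ)
    (hsim : ∀ i x y, dist (S i x) (S i y) = s i * dist x y) :
    ∀ n (w : Fin n → Fin k) (x y : X),
      dist (compMaps S n w x) (compMaps S n w y) = (∏ j, s (w j)) * dist x y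
  | 0, w, x, y => by simp [compMaps]
  | (n+1), w, x, y => by
    have ih := compMaps_dist S s hsim n (Fin.tail w) x y
    simp only [compMaps, Function.comp_apply, hsim, ih, Fin.prod_univ_succ]
    have : ∀ j : Fin n, Fin.tail w j = w j.succ := fun j => rfl
    simp only [this]
    ring

private lemma compMaps_cover {k : ℕ} {X : Type*} (S : Fin k → X → X)
    (A : Set X) (hself : A = ⋃ i, S i '' A) :
    ∀ n, A ⊆ ⋃ w : Fin n → Fin k, compMaps S n w '' A
  | 0 => by
    intro x hx
    exact Set.mem_iUnion.2 ⟨fun i => i.elim0, x, hx, rfl⟩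
  | (n+1) => by
    intro x hx
    rw [hself] at hx
    obtain ⟨i, a, ha, rfl⟩ := by simpa using hx
    obtain ⟨w, b, hb, hba⟩ := by simpa using compMaps_cover S A hself n ha
    refine Set.mem_iUnion.2 ⟨Fin.cons i w, b, hb, ?_⟩
    simp [compMaps, Fin.tail_cons, hba]

/-- If a nonempty compact `A ⊆ ℝ³` is self-similar under similarities with
`∑ sᵢ² < 1`, then the orthogonal projection of `A` onto every 2-dimensional affine
subspace `P` has 2-dimensional Hausdorff (Lebesgue) measure zero.  The orthogonal
projection onto `P` is characterized as the nearest-point map into `P`. -/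
theorem stmt1 (k : ℕ)
    (S : Fin k → EuclideanSpace ℝ (Fin 3) → EuclideanSpace ℝ (Fin 3))
    (s : Fin k → ℝ) (hs : ∀ i, 0 < s i)
    (hsim : ∀ i x y, dist (S i x) (S i y) = s i * dist x y)
    (hsum : ∑ i, (s i) ^ 2 < 1)
    (A : Set (EuclideanSpace ℝ (Fin 3))) (hne : A.Nonempty) (hcomp : IsCompact A)
    (hself : A = ⋃ i, S i '' A)
    (P : AffineSubspace ℝ (EuclideanSpace ℝ (Fin 3)))
    (hPne : (P : Set (EuclideanSpace ℝ (Fin 3))).Nonempty)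
    (hPdim : Module.finrank ℝ P.direction = 2)
    (p : EuclideanSpace ℝ (Fin 3) → EuclideanSpace ℝ (Fin 3))
    (hp : ∀ x, p x ∈ P)
    (hproj : ∀ x, ∀ y ∈ P, dist x (p x) ≤ dist x y) :
    μH[2] (p '' A) = 0 := by
  -- Step 1: `p` is 1-Lipschitz (nearest point projection onto a convex set).
  have hconv : Convex ℝ (P : Set (EuclideanSpace ℝ (Fin 3))) := P.convex
  have hinner : ∀ x, ∀ w ∈ (P : Set (EuclideanSpace ℝ (Fin 3))),
      (inner ℝ (x - p x) (w - p x) : ℝ) ≤ 0 := by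
    intro x
    haveI : Nonempty (P : Set (EuclideanSpace ℝ (Fin 3))) := hPne.to_subtype
    refine (norm_eq_iInf_iff_real_inner_le_zero hconv (hp x)).mp ?_
    refine le_antisymm ?_ ?_
    · exact le_ciInf fun w => by
        simpa [dist_eq_norm] using hproj x w w.2
    · exact ciInf_le ⟨0, fun _ ⟨_, h⟩ => h ▸ norm_nonneg _⟩
        (⟨p x, hp x⟩ : (P : Set (EuclideanSpace ℝ (Fin 3))))
  have hplip : LipschitzWith 1 p := by
    refine LipschitzWith.of_dist_le_mul fun x y => ?_
    rw [NNReal.coe_one, one_mul]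
    simp only [dist_eq_norm]
    set u := p x with hu
    set v := p y with hv
    have h1 : (inner ℝ (x - u) (v - u) : ℝ) ≤ 0 := hinner x v (hp y)
    have h2 : (inner ℝ (y - v) (u - v) : ℝ) ≤ 0 := hinner y u (hp x)
    have hxy : x - y = (x - u) + (u - v) + (v - y) := by abel
    have expand : (inner ℝ (u - v) (x - y) : ℝ)
        = inner ℝ (u - v) (x - u) + inner ℝ (u - v) (u - v) + inner ℝ (u - v) (v - y) := by
      rw [hxy, inner_add_right, inner_add_right]
    have e1 : (inner ℝ (u - v) (x - u) : ℝ) = - inner ℝ (x - u) (v - u) := by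
      rw [real_inner_comm, show u - v = -(v - u) by abel, inner_neg_right]
    have e2 : (inner ℝ (u - v) (v - y) : ℝ) = - inner ℝ (y - v) (u - v) := by
      rw [show v - y = -(y - v) by abel, inner_neg_right,
        real_inner_comm (u - v) (y - v)]
    have key : ‖u - v‖ ^ 2 ≤ (inner ℝ (u - v) (x - y) : ℝ) := by
      rw [expand, e1, e2, real_inner_self_eq_norm_sq]
      linarith
    have hle := real_inner_le_norm (u - v) (x - y)
    nlinarith [norm_nonneg (u - v), norm_nonneg (x - y)]
  -- Step 2: `μH[2] A = 0`.
  have hσlt : ∀ i, s i < 1 := by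
    intro i
    have h1 : (s i) ^ 2 ≤ ∑ j, (s j) ^ 2 :=
      Finset.single_le_sum (fun j _ => sq_nonneg (s j)) (Finset.mem_univ i)
    nlinarith [hs i]
  set σ : Fin k → ℝ≥0 := fun i => ⟨s i, (hs i).le⟩ with hσ
  have hσcoe : ∀ i, (σ i : ℝ) = s i := fun i => rfl
  set D : ℝ≥0∞ := EMetric.diam A with hD
  have hDne : D ≠ ⊤ := hcomp.isBounded.ediam_ne_top
  -- each iterated map is Lipschitz with the product constant
  have hlip : ∀ n (w : Fin n → Fin k), LipschitzWith (∏ j, σ (w j)) (compMaps S n w) := by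
    intro n w
    refine LipschitzWith.of_dist_le_mul fun x y => ?_
    rw [compMaps_dist S s hsim n w x y]
    have : ((∏ j, σ (w j) : ℝ≥0) : ℝ) = ∏ j, s (w j) := by
      push_cast [hσcoe]; rfl
    rw [this]
  have hdiam : ∀ n (w : Fin n → Fin k),
      EMetric.diam (compMaps S n w '' A) ≤ ((∏ j, σ (w j) : ℝ≥0) : ℝ≥0∞) * D :=
    fun n w => (hlip n w).ediam_image_le A
  -- geometric bound on diameters
  set c : ℝ≥0 := Finset.univ.sup σ with hc
  have hσc : ∀ i, σ i ≤ c := fun i => Finset.le_sup (Finset.mem_univ i)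
  have hclt : (c : ℝ≥0∞) < 1 := by
    rw [show (1 : ℝ≥0∞) = ((1 : ℝ≥0) : ℝ≥0∞) by simp]
    rw [ENNReal.coe_lt_coe, hc]
    exact (Finset.sup_lt_iff (show (⊥ : ℝ≥0) < 1 by simp)).mpr fun i _ => by
      rw [← NNReal.coe_lt_coe]; exact hσlt i
  have hprodc : ∀ n (w : Fin n → Fin k), (∏ j, σ (w j)) ≤ c ^ n := by
    intro n w
    calc ∏ j, σ (w j) ≤ ∏ _j : Fin n, c := Finset.prod_le_prod' fun j _ => hσc (w j)
    _ = c ^ n := by simp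
  have hrtend : Filter.Tendsto (fun n : ℕ => ((c : ℝ≥0∞)) ^ n * D)
      Filter.atTop (nhds 0) := by
    have := ENNReal.Tendsto.mul_const
      (ENNReal.tendsto_pow_atTop_nhds_zero_of_lt_one hclt) (Or.inr hDne)
    simpa using this
  -- apply the covering bound
  have hmain : μH[(2 : ℝ)] A ≤
      Filter.liminf (fun n : ℕ =>
        ∑ w : Fin n → Fin k, EMetric.diam (compMaps S n w '' A) ^ (2 : ℝ))
        Filter.atTop := by
    refine Measure.hausdorffMeasure_le_liminf_sum (2 : ℝ) A (fun n => (c : ℝ≥0∞) ^ n * D)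
      hrtend (fun n w => compMaps S n w '' A) ?_ ?_
    · refine Filter.Eventually.of_forall fun n => fun w => ?_
      refine (hdiam n w).trans ?_
      refine mul_le_mul_left ?_ D
      exact_mod_cast hprodc n w
    · exact Filter.Eventually.of_forall fun n => compMaps_cover S A hself n
  -- bound each term of the sum
  set q : ℝ≥0∞ := ∑ i, ((σ i : ℝ≥0∞)) ^ 2 with hq
  have hqlt : q < 1 := by
    have h1 : q = ((∑ i, σ i ^ 2 : ℝ≥0) : ℝ≥0∞) := by push_cast; rfl
    rw [h1, ← ENNReal.coe_one, ENNReal.coe_lt_coe, ← NNReal.coe_lt_coe]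
    push_cast [hσcoe]
    simpa using hsum
  have hsumbound : ∀ n : ℕ,
      ∑ w : Fin n → Fin k, EMetric.diam (compMaps S n w '' A) ^ (2 : ℝ)
        ≤ q ^ n * D ^ (2 : ℝ) := by
    intro n
    have step : ∀ w : Fin n → Fin k,
        EMetric.diam (compMaps S n w '' A) ^ (2 : ℝ)
          ≤ (∏ j, ((σ (w j) : ℝ≥0∞)) ^ 2) * D ^ (2 : ℝ) := by
      intro w
      calc EMetric.diam (compMaps S n w '' A) ^ (2 : ℝ)
          ≤ (((∏ j, σ (w j) : ℝ≥0) : ℝ≥0∞) * D) ^ (2 : ℝ) :=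
            ENNReal.rpow_le_rpow (hdiam n w) (by norm_num)
        _ = ((∏ j, σ (w j) : ℝ≥0) : ℝ≥0∞) ^ (2 : ℝ) * D ^ (2 : ℝ) :=
            ENNReal.mul_rpow_of_nonneg _ _ (by norm_num)
        _ = (∏ j, ((σ (w j) : ℝ≥0∞)) ^ 2) * D ^ (2 : ℝ) := by
            congr 1
            rw [ENNReal.coe_finset_prod]
            rw [show ((2 : ℝ)) = ((2 : ℕ) : ℝ) by norm_num, ENNReal.rpow_natCast]
            rw [Finset.prod_pow]
    calc ∑ w : Fin n → Fin k, EMetric.diam (compMaps S n w '' A) ^ (2 : ℝ)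
        ≤ ∑ w : Fin n → Fin k, (∏ j, ((σ (w j) : ℝ≥0∞)) ^ 2) * D ^ (2 : ℝ) :=
          Finset.sum_le_sum fun w _ => step w
      _ = (∑ w : Fin n → Fin k, ∏ j, ((σ (w j) : ℝ≥0∞)) ^ 2) * D ^ (2 : ℝ) := by
          rw [Finset.sum_mul]
      _ = q ^ n * D ^ (2 : ℝ) := by
          congr 1
          rw [hq]
          rw [← Fintype.prod_sum (fun (_ : Fin n) (i : Fin k) => ((σ i : ℝ≥0∞)) ^ 2)]
          simp
  have hA0 : μH[(2 : ℝ)] A = 0 := by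
    refine le_antisymm ?_ zero_le
    refine hmain.trans ?_
    have htend0 : Filter.Tendsto (fun n : ℕ => q ^ n * D ^ (2 : ℝ))
        Filter.atTop (nhds 0) := by
      have hD2 : D ^ (2 : ℝ) ≠ ⊤ := by
        exact ENNReal.rpow_ne_top_of_nonneg (by norm_num) hDne
      have := ENNReal.Tendsto.mul_const
        (ENNReal.tendsto_pow_atTop_nhds_zero_of_lt_one hqlt) (Or.inr hD2)
      simpa using this
    calc Filter.liminf (fun n : ℕ =>
          ∑ w : Fin n → Fin k, EMetric.diam (compMaps S n w '' A) ^ (2 : ℝ))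
          Filter.atTop
        ≤ Filter.liminf (fun n : ℕ => q ^ n * D ^ (2 : ℝ)) Filter.atTop :=
          Filter.liminf_le_liminf (Filter.Eventually.of_forall hsumbound)
      _ = 0 := htend0.liminf_eq
  -- Step 3: conclude via Lipschitz image
  have := hplip.hausdorffMeasure_image_le (by norm_num : (0 : ℝ) ≤ 2) A
  refine le_antisymm ?_ zero_le
  calc μH[(2 : ℝ)] (p '' A) ≤ ((1 : ℝ≥0) : ℝ≥0∞) ^ (2 : ℝ) * μH[(2 : ℝ)] A := this
    _ = 0 := by rw [hA0]; simp
end
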